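/- Let C be a quasi-cyclic code defined by a J×L polynomial parity-check matrix H(x) over F_2[x]/(x^r−1), and let A = wt(H(x)) be its J×L integer weight matrix. For any subset S ⊆ {0,...,L-1} of size J+1 such that Σ_{i∈S} perm(A_{S\{i}}) > 0, the minimum Hamming distance of C satisfies d_min(C) ≤ Σ_{i∈S} perm(A_{S\{i}}). -/

import Mathlib

open Matrix BigOperators

noncomputable section

/-- The ring `F₂[x]/(xʳ−1)`, realized as the group algebra of `ℤ/rℤ` over `F₂`.
    (For `r > 0` this is isomorphic to `F₂[x]/(xʳ−1)`, and the canonical representative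
    of degree `< r` corresponds to the `Finsupp` on `ZMod r`.) -/
abbrev Rr (r : ℕ) : Type := AddMonoidAlgebra (ZMod 2) (ZMod r)

/-- The monomial `xᵃ`. -/
def mono {r : ℕ} (a : ZMod r) : Rr r := AddMonoidAlgebra.single a 1

/-- Weight of an element of `Rr r`: the number of nonzero coefficients. -/
def wt {r : ℕ} (p : Rr r) : ℕ := p.coeff.support.card

/-- Square submatrix of `H` given by the columns in `T`. -/
def colSub {J L : ℕ} {R : Type*} (H : Matrix (Fin J) (Fin L) R) (T : Finset (Fin L))
    (h : T.card = J) : Matrix (Fin J) (Fin J) R :=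
  fun j k => H j (T.orderIsoOfFin h k)

/-- Square submatrix of `H` given by the columns in `S \ {i}` where `S` has `J+1` elements. -/
def eraseSub {J L : ℕ} {R : Type*} (H : Matrix (Fin J) (Fin L) R) (S : Finset (Fin L))
    (hS : S.card = J + 1) (i : Fin L) (hi : i ∈ S) : Matrix (Fin J) (Fin J) R :=
  colSub H (S.erase i) (by rw [Finset.card_erase_of_mem hi, hS]; rfl)

def isCodeword {r : ℕ} {ι κ : Type*} [Fintype κ] (H : Matrix ι κ (Rr r)) (c : κ → Rr r) : Prop :=
  ∀ j, ∑ i, H j i * c i = 0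

/-- Hamming weight of a vector over `Rr r`. -/
def wH {r : ℕ} {κ : Type*} [Fintype κ] (c : κ → Rr r) : ℕ := ∑ i, wt (c i)

/-- Minimum Hamming distance of the code with parity-check matrix `H`. -/
def dmin {r : ℕ} {ι κ : Type*} [Fintype κ] (H : Matrix ι κ (Rr r)) : ℕ :=
  sInf {w | ∃ c, isCodeword H c ∧ c ≠ 0 ∧ wH c = w}


/-! ### Auxiliary lemmas -/

section Aux

variable {r : ℕ}

lemma wt_zero' : wt (0 : Rr r) = 0 := by simp [wt]

lemma wt_eq_zero_iff' {p : Rr r} : wt p = 0 ↔ p = 0 := by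
  simp [wt, Finset.card_eq_zero]

lemma wt_one' : wt (1 : Rr r) = 1 := by
  classical
  simp [wt, AddMonoidAlgebra.one_def]

lemma wt_add_le' (p q : Rr r) : wt (p + q) ≤ wt p + wt q :=
  (Finset.card_le_card (Finsupp.support_add (g₁ := p.coeff) (g₂ := q.coeff))).trans (Finset.card_union_le _ _)

lemma wt_mul_le' (p q : Rr r) : wt (p * q) ≤ wt p * wt q := by
  classical
  exact (Finset.card_le_card (AddMonoidAlgebra.support_coeff_mul_subset p q)).trans
    Finset.card_add_le

lemma wt_sum_le' {ι : Type*} (s : Finset ι) (f : ι → Rr r) :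
    wt (∑ i ∈ s, f i) ≤ ∑ i ∈ s, wt (f i) := by
  classical
  induction s using Finset.induction with
  | empty => simp [wt_zero']
  | insert _ _ h ih =>
      rw [Finset.sum_insert h, Finset.sum_insert h]
      exact (wt_add_le' _ _).trans (by omega)

lemma wt_prod_le' {ι : Type*} (s : Finset ι) (f : ι → Rr r) :
    wt (∏ i ∈ s, f i) ≤ ∏ i ∈ s, wt (f i) := by
  classical
  induction s using Finset.induction with
  | empty => simp [wt_one']
  | insert _ _ h ih =>
      rw [Finset.prod_insert h, Finset.prod_insert h]
      exact (wt_mul_le' _ _).trans (Nat.mul_le_mul le_rfl ih)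

lemma two_eq_zero' : (2 : Rr r) = 0 := by
  have h2 : ((2 : ℕ) : ZMod 2) = 0 := by decide
  have := map_natCast (algebraMap (ZMod 2) (Rr r)) 2
  rw [h2, map_zero] at this
  rw [← Nat.cast_ofNat (R := Rr r) (n := 2), ← this]

lemma neg_one_eq_one' : (-1 : Rr r) = 1 := by
  refine neg_eq_of_add_eq_zero_left ?_
  rw [← two_eq_zero' (r := r)]; norm_num

lemma wt_det_le' {n : ℕ} (M : Matrix (Fin n) (Fin n) (Rr r)) :
    wt M.det ≤ (Matrix.of fun i j => wt (M i j)).permanent := by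
  rw [Matrix.det_apply, Matrix.permanent]
  refine (wt_sum_le' _ _).trans (Finset.sum_le_sum fun σ _ => ?_)
  have h : wt (Equiv.Perm.sign σ • ∏ i, M (σ i) i) = wt (∏ i, M (σ i) i) := by
    rcases Int.units_eq_one_or (Equiv.Perm.sign σ) with h | h <;> rw [h]
    · rw [one_smul]
    · rw [Units.neg_smul, one_smul]; exact congrArg Finset.card (Finsupp.support_neg (∏ i, M (σ i) i).coeff)
  rw [h]
  exact (wt_prod_le' _ _)

lemma det_laplace' {m : ℕ} (M : Matrix (Fin (m+1)) (Fin (m+1)) (Rr r)) :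
    M.det = ∑ k, M 0 k * (M.submatrix Fin.succ k.succAbove).det := by
  rw [Matrix.det_succ_row_zero]
  refine Finset.sum_congr rfl fun k _ => ?_
  rw [show ((-1 : Rr r) ^ (k : ℕ)) = 1 by rw [neg_one_eq_one', one_pow], one_mul]

lemma sign_cast' (n : ℕ) (σ : Equiv.Perm (Fin n)) : ((Equiv.Perm.sign σ : ℤ) : Rr r) = 1 := by
  rcases Int.units_eq_one_or (Equiv.Perm.sign σ) with h | h <;> rw [h] <;>
    simp [neg_one_eq_one']

lemma det_reindex' {m : ℕ} {ι κ : Type*} [Fintype ι] [Fintype κ] [DecidableEq ι] [DecidableEq κ]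
    (N : Matrix ι κ (Rr r)) (f₁ f₂ : Fin m → ι) (g₁ g₂ : Fin m → κ)
    (hf₁ : Function.Injective f₁) (hf₂ : Function.Injective f₂)
    (hg₁ : Function.Injective g₁) (hg₂ : Function.Injective g₂)
    (hf : Set.range f₂ = Set.range f₁) (hg : Set.range g₂ = Set.range g₁) :
    (N.submatrix f₂ g₂).det = (N.submatrix f₁ g₁).det := by
  classical
  let e₁ := Equiv.ofInjective f₁ hf₁
  let e₂ := Equiv.ofInjective f₂ hf₂
  let σ : Equiv.Perm (Fin m) := (e₂.trans (Equiv.setCongr hf)).trans e₁.symm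
  have hσ : ∀ a, f₁ (σ a) = f₂ a := by
    intro a
    have : (e₁ (σ a) : ι) = ((e₂.trans (Equiv.setCongr hf)) a : ι) := by
      simp [σ]
    simpa [e₁, e₂] using this
  let d₁ := Equiv.ofInjective g₁ hg₁
  let d₂ := Equiv.ofInjective g₂ hg₂
  let τ : Equiv.Perm (Fin m) := (d₂.trans (Equiv.setCongr hg)).trans d₁.symm
  have hτ : ∀ a, g₁ (τ a) = g₂ a := by
    intro a
    have : (d₁ (τ a) : κ) = ((d₂.trans (Equiv.setCongr hg)) a : κ) := by
      simp [τ]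
    simpa [d₁, d₂] using this
  have hsub : N.submatrix f₂ g₂ = ((N.submatrix f₁ g₁).submatrix id τ).submatrix σ id := by
    ext a b; simp [Matrix.submatrix, hσ, hτ]
  rw [hsub, Matrix.det_permute, Matrix.det_permute', sign_cast', sign_cast', one_mul, one_mul]

lemma erase_orderEmbOfFin' {α : Type*} [LinearOrder α] [DecidableEq α] (W : Finset α) {n : ℕ}
    (h : W.card = n + 1) (k : Fin (n + 1))
    (h' : (W.erase (W.orderEmbOfFin h k)).card = n) :
    (W.erase (W.orderEmbOfFin h k)).orderEmbOfFin h' =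
      fun m => W.orderEmbOfFin h (k.succAbove m) := by
  refine (Finset.orderEmbOfFin_unique h' (f := fun m => W.orderEmbOfFin h (k.succAbove m))
    (fun m => ?_) ?_).symm
  · refine Finset.mem_erase.2 ⟨?_, Finset.orderEmbOfFin_mem _ _ _⟩
    intro hc
    exact (Fin.succAbove_ne k m) ((W.orderEmbOfFin h).injective hc)
  · exact fun a b hab => (W.orderEmbOfFin h).strictMono (Fin.strictMono_succAbove k hab)

lemma image_orderEmbOfFin' {α : Type*} [LinearOrder α] [DecidableEq α] (W : Finset α) {n : ℕ}
    (h : W.card = n) : Finset.image (W.orderEmbOfFin h) Finset.univ = W := by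
  apply Finset.coe_injective
  rw [Finset.coe_image, Finset.coe_univ, Set.image_univ, Finset.range_orderEmbOfFin]

lemma card_erase_of_mem'' {α : Type*} [DecidableEq α] {W : Finset α} {n : ℕ}
    (h : W.card = n + 1) {i : α} (hi : i ∈ W) : (W.erase i).card = n := by
  rw [Finset.card_erase_of_mem hi, h]; rfl

lemma permanent_submatrix_le' {J t : ℕ} (M : Matrix (Fin J) (Fin J) ℕ)
    (e c : Fin t → Fin J) (he : Function.Injective e) (hc : Function.Injective c)
    (q : Fin J → Fin J)
    (hq : ∀ m m', (∀ b, c b ≠ m) → (∀ b, c b ≠ m') → q m = q m' → m = m')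
    (hcases : ∀ m : Fin J, (∀ b, c b ≠ m) → 1 ≤ M (q m) m ∧ (∀ a, e a ≠ q m)) :
    (M.submatrix e c).permanent ≤ M.permanent := by
  classical
  set φ : Equiv.Perm (Fin t) → Fin J → Fin J := fun τ m =>
    if h : ∃ b, c b = m then e (τ h.choose) else q m with hφ
  have hφc : ∀ τ b, φ τ (c b) = e (τ b) := by
    intro τ b
    have h : ∃ b', c b' = c b := ⟨b, rfl⟩
    have : h.choose = b := hc h.choose_spec
    simp [hφ, dif_pos h, this]
  have hφn : ∀ τ m, (∀ b, c b ≠ m) → φ τ m = q m := by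
    intro τ m hm
    have : ¬ ∃ b, c b = m := by push_neg; exact hm
    simp [hφ, dif_neg this]
  have hinj : ∀ τ, Function.Injective (φ τ) := by
    intro τ m m' hmm
    by_cases h1 : ∃ b, c b = m <;> by_cases h2 : ∃ b', c b' = m'
    · obtain ⟨b, rfl⟩ := h1; obtain ⟨b', rfl⟩ := h2
      rw [hφc, hφc] at hmm
      exact congrArg c (τ.injective (he hmm))
    · obtain ⟨b, rfl⟩ := h1
      push_neg at h2
      rw [hφc, hφn τ m' h2] at hmm
      exact absurd hmm ((hcases m' h2).2 (τ b))
    · obtain ⟨b', rfl⟩ := h2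
      push_neg at h1
      rw [hφn τ m h1, hφc] at hmm
      exact absurd hmm.symm ((hcases m h1).2 (τ b'))
    · push_neg at h1; push_neg at h2
      rw [hφn τ m h1, hφn τ m' h2] at hmm
      exact hq m m' h1 h2 hmm
  set Φ : Equiv.Perm (Fin t) → Equiv.Perm (Fin J) := fun τ =>
    Equiv.ofBijective _ (Finite.injective_iff_bijective.mp (hinj τ)) with hΦ
  have hΦapp : ∀ τ m, Φ τ m = φ τ m := fun τ m => rfl
  have hΦinj : Function.Injective Φ := by
    intro τ τ' h
    ext b
    have := congrArg (fun σ : Equiv.Perm (Fin J) => σ (c b)) h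
    simp only [hΦapp, hφc] at this
    exact congrArg Fin.val (he this)
  have hprod : ∀ τ : Equiv.Perm (Fin t),
      (∏ b, (M.submatrix e c) (τ b) b) ≤ ∏ m, M (Φ τ m) m := by
    intro τ
    have h1 : (∏ b, (M.submatrix e c) (τ b) b)
        = ∏ m ∈ Finset.univ.image c, M (Φ τ m) m := by
      rw [Finset.prod_image (fun a _ b _ h => hc h)]
      refine Finset.prod_congr rfl fun b _ => ?_
      rw [hΦapp, hφc]; rfl
    rw [h1]
    refine Finset.prod_le_prod_of_subset_of_one_le' (Finset.subset_univ _) ?_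
    intro m _ hm
    have hm' : ∀ b, c b ≠ m := by
      intro b hb; exact hm (Finset.mem_image.2 ⟨b, Finset.mem_univ b, hb⟩)
    rw [hΦapp, hφn τ m hm']
    exact (hcases m hm').1
  calc (M.submatrix e c).permanent = ∑ τ : Equiv.Perm (Fin t), ∏ b, (M.submatrix e c) (τ b) b := rfl
    _ ≤ ∑ τ : Equiv.Perm (Fin t), ∏ m, M (Φ τ m) m := Finset.sum_le_sum fun τ _ => hprod τ
    _ = ∑ σ ∈ Finset.univ.image Φ, ∏ m, M (σ m) m := by
        rw [Finset.sum_image (fun a _ b _ h => hΦinj h)]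
    _ ≤ ∑ σ : Equiv.Perm (Fin J), ∏ m, M (σ m) m :=
        Finset.sum_le_sum_of_subset (Finset.subset_univ _)
    _ = M.permanent := rfl

end Aux

lemma core_lemma {r J : ℕ} (N : Matrix (Fin J) (Fin (J+1)) (Rr r))
    (ρ₀ : Fin J → Fin (J+1)) (hρ₀ : Function.Injective ρ₀)
    (h0 : ∀ j, N j (ρ₀ j) ≠ 0) :
    ∃ x : Fin (J+1) → Rr r, x ≠ 0 ∧ (∀ j, ∑ k, N j k * x k = 0) ∧
      ∑ k, wt (x k) ≤ ∑ k : Fin (J+1),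
        (Matrix.of fun j m => wt (N j (k.succAbove m))).permanent := by
  classical
  -- the maximality structure
  set P : ℕ → Prop := fun u => ∃ (T : Finset (Fin J)) (ρ : Fin J → Fin (J+1))
      (h : T.card = u),
      Function.Injective ρ ∧ (∀ j ∉ T, N j (ρ j) ≠ 0) ∧
      (N.submatrix (fun a => T.orderEmbOfFin h a) (fun a => ρ (T.orderEmbOfFin h a))).det ≠ 0
    with hPdef
  have hP0 : P 0 := by
    refine ⟨∅, ρ₀, Finset.card_empty, hρ₀, fun j _ => h0 j, ?_⟩
    rw [Matrix.det_isEmpty]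
    exact one_ne_zero
  set t := Nat.findGreatest P J with ht
  have hPt : P t := Nat.findGreatest_spec (Nat.zero_le J) hP0
  have hmax : ¬ P (t + 1) := by
    intro hPm
    obtain ⟨T, ρ, hcard, -⟩ := id hPm
    have hle : t + 1 ≤ J := by
      rw [← hcard]
      simpa using T.card_le_univ
    exact Nat.findGreatest_is_greatest (lt_add_one t) hle hPm
  obtain ⟨T, ρ, hcard, hρinj, hoff, hdet⟩ := hPt
  -- the missing column i₀
  have hsd : (Finset.univ \ Finset.univ.image ρ).card = 1 := by
    rw [Finset.card_sdiff_of_subset (Finset.subset_univ _),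
      Finset.card_image_of_injective _ hρinj]
    simp
  obtain ⟨i₀, hi₀eq⟩ := Finset.card_eq_one.1 hsd
  have hi₀ : ∀ j, ρ j ≠ i₀ := by
    intro j hj
    have h1 : i₀ ∈ Finset.univ \ Finset.univ.image ρ := by
      rw [hi₀eq]; exact Finset.mem_singleton_self i₀
    rw [Finset.mem_sdiff] at h1
    exact h1.2 (Finset.mem_image.2 ⟨j, Finset.mem_univ j, hj⟩)
  have hcov : ∀ y : Fin (J+1), y ≠ i₀ → ∃ j, ρ j = y := by
    intro y hy
    by_contra hc
    push_neg at hc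
    have h1 : y ∈ Finset.univ \ Finset.univ.image ρ := by
      rw [Finset.mem_sdiff]
      refine ⟨Finset.mem_univ y, ?_⟩
      intro hmem
      obtain ⟨j, _, hj⟩ := Finset.mem_image.1 hmem
      exact hc j hj
    rw [hi₀eq, Finset.mem_singleton] at h1
    exact hy h1
  set W : Finset (Fin (J+1)) := insert i₀ (T.image ρ) with hWdef
  have hino : i₀ ∉ T.image ρ := by
    intro hmem
    obtain ⟨j, _, hj⟩ := Finset.mem_image.1 hmem
    exact hi₀ j hj
  have hWcard : W.card = t + 1 := by
    rw [hWdef, Finset.card_insert_of_notMem hino,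
      Finset.card_image_of_injective _ hρinj, hcard]
  set eT : Fin t → Fin J := fun a => T.orderEmbOfFin hcard a with heT
  have heTinj : Function.Injective eT := fun a b h => (T.orderEmbOfFin hcard).injective h
  have heTrange : Set.range eT = ↑T := Finset.range_orderEmbOfFin T hcard
  have heTmem : ∀ a, eT a ∈ T := fun a => Finset.orderEmbOfFin_mem T hcard a
  set eW : Fin (t+1) → Fin (J+1) := fun b => W.orderEmbOfFin hWcard b with heW
  have heWinj : Function.Injective eW := fun a b h => (W.orderEmbOfFin hWcard).injective h
  have heWrange : Set.range eW = ↑W := Finset.range_orderEmbOfFin W hWcard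
  have hsumW : ∀ {M : Type} [inst : AddCommMonoid M] (f : Fin (J+1) → M),
      (∑ i ∈ W, f i) = ∑ k : Fin (t+1), f (eW k) := by
    intro M inst f
    rw [← image_orderEmbOfFin' W hWcard]
    exact Finset.sum_image (fun a _ b _ h => (W.orderEmbOfFin hWcard).injective h)
  -- the candidate codeword
  set x : Fin (J+1) → Rr r := fun i =>
    if h : i ∈ W then
      (N.submatrix eT (fun b => (W.erase i).orderEmbOfFin (card_erase_of_mem'' hWcard h) b)).det
    else 0 with hxdef
  have hxW : ∀ i (h : i ∈ W), x i =
      (N.submatrix eT (fun b => (W.erase i).orderEmbOfFin (card_erase_of_mem'' hWcard h) b)).det := by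
    intro i h; rw [hxdef]; exact dif_pos h
  have hxnW : ∀ i, i ∉ W → x i = 0 := by
    intro i h; rw [hxdef]; exact dif_neg h
  -- x i₀ is the original determinant (up to reindexing), hence nonzero
  have hi₀W : i₀ ∈ W := Finset.mem_insert_self _ _
  have hx₀ : x i₀ ≠ 0 := by
    rw [hxW i₀ hi₀W]
    have hWe : W.erase i₀ = T.image ρ := by rw [hWdef]; exact Finset.erase_insert hino
    have hrange : Set.range (fun b => (W.erase i₀).orderEmbOfFin
        (card_erase_of_mem'' hWcard hi₀W) b) = Set.range (fun a => ρ (eT a)) := by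
      rw [Finset.range_orderEmbOfFin, hWe]
      rw [show (fun a => ρ (eT a)) = ρ ∘ eT from rfl, Set.range_comp, heTrange]
      rw [Finset.coe_image]
    rw [det_reindex' N eT eT (fun a => ρ (eT a))
      (fun b => (W.erase i₀).orderEmbOfFin (card_erase_of_mem'' hWcard hi₀W) b)
      heTinj heTinj (fun a b h => heTinj (hρinj h))
      (fun a b h => ((W.erase i₀).orderEmbOfFin _).injective h)
      rfl hrange]
    exact hdet
  have hxne : x ≠ 0 := by
    intro h
    exact hx₀ (congrFun h i₀)
  -- the Laplace identity
  have hkey : ∀ j : Fin J, (∑ k, N j k * x k) =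
      (Matrix.of fun a b => N (Fin.cases j eT a) (eW b) :
        Matrix (Fin (t+1)) (Fin (t+1)) (Rr r)).det := by
    intro j
    rw [det_laplace']
    have hsum1 : (∑ k, N j k * x k) = ∑ i ∈ W, N j i * x i := by
      refine (Finset.sum_subset (Finset.subset_univ W) ?_).symm
      intro i _ hiW
      rw [hxnW i hiW, mul_zero]
    rw [hsum1, hsumW]
    refine Finset.sum_congr rfl fun k _ => ?_
    have hmem : eW k ∈ W := Finset.orderEmbOfFin_mem W hWcard k
    rw [hxW _ hmem]
    refine congrArg₂ HMul.hMul ?_ (congrArg Matrix.det ?_)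
    · rw [Matrix.of_apply, Fin.cases_zero]
    · ext a b
      rw [Matrix.submatrix_apply, Matrix.submatrix_apply, Matrix.of_apply, Fin.cases_succ,
        show ((W.erase (eW k)).orderEmbOfFin (card_erase_of_mem'' hWcard hmem) b)
            = eW (k.succAbove b) from congrFun (erase_orderEmbOfFin' W hWcard k _) b]
  -- orthogonality
  have horth : ∀ j, (∑ k, N j k * x k) = 0 := by
    intro j
    rw [hkey j]
    by_cases hjT : j ∈ T
    · -- duplicated row
      have : j ∈ Set.range eT := by rw [heTrange]; exact hjT
      obtain ⟨a₀, ha₀⟩ := this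
      refine Matrix.det_zero_of_row_eq (Fin.succ_ne_zero a₀).symm ?_
      funext b
      rw [Matrix.of_apply, Matrix.of_apply, Fin.cases_zero, Fin.cases_succ, ha₀]
    · -- otherwise we could extend the witness, contradicting maximality
      by_contra hne
      apply hmax
      set T' : Finset (Fin J) := insert j T with hT'def
      have hcard' : T'.card = t + 1 := by
        rw [hT'def, Finset.card_insert_of_notMem hjT, hcard]
      set ρ' : Fin J → Fin (J+1) := Function.update ρ j i₀ with hρ'def
      have hρ'j : ρ' j = i₀ := Function.update_self j i₀ ρ
      have hρ'n : ∀ j', j' ≠ j → ρ' j' = ρ j' := fun j' h =>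
        Function.update_of_ne h i₀ ρ
      have hρ'inj : Function.Injective ρ' := by
        intro a b hab
        by_cases ha : a = j <;> by_cases hb : b = j
        · rw [ha, hb]
        · rw [ha, hρ'j] at hab
          rw [hρ'n b hb] at hab
          exact absurd hab.symm (hi₀ b)
        · rw [hb, hρ'j] at hab
          rw [hρ'n a ha] at hab
          exact absurd hab (hi₀ a)
        · rw [hρ'n a ha, hρ'n b hb] at hab
          exact hρinj hab
      refine ⟨T', ρ', hcard', hρ'inj, ?_, ?_⟩
      · intro j' hj'
        rw [hT'def, Finset.mem_insert] at hj'
        push_neg at hj'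
        rw [hρ'n j' hj'.1]
        exact hoff j' hj'.2
      · -- the new determinant is (up to reindexing) the Laplace determinant
        set f₁ : Fin (t+1) → Fin J := Fin.cases j eT with hf₁def
        have hf₁inj : Function.Injective f₁ := by
          intro a b hab
          induction a using Fin.cases with
          | zero =>
              induction b using Fin.cases with
              | zero => rfl
              | succ b' =>
                  rw [hf₁def] at hab
                  simp only [Fin.cases_zero, Fin.cases_succ] at hab
                  exact absurd (hab ▸ heTmem b') hjT
          | succ a' =>
              induction b using Fin.cases with
              | zero =>
                  rw [hf₁def] at hab
                  simp only [Fin.cases_zero, Fin.cases_succ] at hab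
                  exact absurd (hab ▸ heTmem a') hjT
              | succ b' =>
                  rw [hf₁def] at hab
                  simp only [Fin.cases_succ] at hab
                  rw [heTinj hab]
        have hf₁range : Set.range f₁ = ↑T' := by
          ext y
          constructor
          · rintro ⟨a, rfl⟩
            induction a using Fin.cases with
            | zero => rw [hf₁def]; simp [hT'def]
            | succ a' =>
                rw [hf₁def]
                simp only [Fin.cases_succ]
                rw [hT'def]
                exact Finset.mem_coe.2 (Finset.mem_insert_of_mem (heTmem a'))
          · intro hy
            rw [hT'def, Finset.coe_insert, Set.mem_insert_iff] at hy
            rcases hy with rfl | hy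
            · exact ⟨0, by rw [hf₁def]; simp⟩
            · have : y ∈ Set.range eT := by rw [heTrange]; exact hy
              obtain ⟨a, ha⟩ := this
              exact ⟨a.succ, by rw [hf₁def]; simp [ha]⟩
        set eT' : Fin (t+1) → Fin J := fun a => T'.orderEmbOfFin hcard' a with heT'def
        have heT'inj : Function.Injective eT' :=
          fun a b h => (T'.orderEmbOfFin hcard').injective h
        have heT'range : Set.range eT' = ↑T' := Finset.range_orderEmbOfFin T' hcard'
        have hg₂inj : Function.Injective (fun a => ρ' (eT' a)) :=
          fun a b h => heT'inj (hρ'inj h)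
        have hg₂range : Set.range (fun a => ρ' (eT' a)) = ↑W := by
          rw [show (fun a => ρ' (eT' a)) = ρ' ∘ eT' from rfl, Set.range_comp, heT'range]
          rw [hT'def, Finset.coe_insert, Set.image_insert_eq, hρ'j, hWdef,
            Finset.coe_insert, Finset.coe_image]
          congr 1
          ext y
          constructor
          · rintro ⟨z, hz, rfl⟩
            exact ⟨z, hz, (hρ'n z (fun h => hjT (h ▸ hz))).symm⟩
          · rintro ⟨z, hz, rfl⟩
            exact ⟨z, hz, hρ'n z (fun h => hjT (h ▸ hz))⟩
        rw [det_reindex' N f₁ eT' eW (fun a => ρ' (eT' a))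
          hf₁inj heT'inj heWinj hg₂inj
          (by rw [hf₁range, heT'range]) (by rw [hg₂range, heWrange])]
        exact hne
  -- the weight bound
  have hbound : (∑ k, wt (x k)) ≤ ∑ k : Fin (J+1),
      (Matrix.of fun j m => wt (N j (k.succAbove m))).permanent := by
    have hsum1 : (∑ k, wt (x k)) = ∑ i ∈ W, wt (x i) := by
      refine (Finset.sum_subset (Finset.subset_univ W) ?_).symm
      intro i _ hiW
      rw [hxnW i hiW, wt_eq_zero_iff'.2 rfl]
    rw [hsum1]
    refine le_trans (Finset.sum_le_sum ?_) (Finset.sum_le_sum_of_subset (Finset.subset_univ W))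
    intro i hiW
    rw [hxW i hiW]
    refine le_trans (wt_det_le' _) ?_
    -- now apply the permanent comparison
    set eV : Fin t → Fin (J+1) :=
      fun b => (W.erase i).orderEmbOfFin (card_erase_of_mem'' hWcard hiW) b with heVdef
    have heVinj : Function.Injective eV :=
      fun a b h => ((W.erase i).orderEmbOfFin _).injective h
    have heVmem : ∀ b, eV b ∈ W.erase i :=
      fun b => Finset.orderEmbOfFin_mem _ _ b
    have heVrange : Set.range eV = ↑(W.erase i) := Finset.range_orderEmbOfFin _ _
    -- the pullback of eV through i.succAbove
    have hc' : ∀ b, ∃ z : Fin J, i.succAbove z = eV b := by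
      intro b
      exact Fin.exists_succAbove_eq (Finset.ne_of_mem_erase (heVmem b))
    set c : Fin t → Fin J := fun b => (hc' b).choose with hcdef
    have hcspec : ∀ b, i.succAbove (c b) = eV b := fun b => (hc' b).choose_spec
    have hcinj : Function.Injective c := by
      intro a b hab
      apply heVinj
      rw [← hcspec a, ← hcspec b, hab]
    -- the big matrix
    set M : Matrix (Fin J) (Fin J) ℕ :=
      Matrix.of (fun j m => wt (N j (i.succAbove m))) with hMdef
    have hsub : (Matrix.of fun a b => wt ((N.submatrix eT eV) a b)) = M.submatrix eT c := by
      ext a b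
      rw [Matrix.of_apply, Matrix.submatrix_apply, Matrix.submatrix_apply, hMdef,
        Matrix.of_apply, hcspec]
    rw [hsub]
    -- leftover assignment q
    have hq' : ∀ m : Fin J, ∃ j' : Fin J, (∀ b, c b ≠ m) → ρ j' = i.succAbove m ∧ j' ∉ T := by
      intro m
      by_cases hm : ∀ b, c b ≠ m
      · -- i.succAbove m ∉ W
        have hWm : i.succAbove m ∉ W := by
          intro hmem
          have hmem' : i.succAbove m ∈ W.erase i :=
            Finset.mem_erase.2 ⟨Fin.succAbove_ne i m, hmem⟩
          have : i.succAbove m ∈ Set.range eV := by rw [heVrange]; exact hmem'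
          obtain ⟨b, hb⟩ := this
          exact hm b (by apply Fin.succAbove_right_injective (p := i); rw [hcspec b, hb])
        have hne₀ : i.succAbove m ≠ i₀ := by
          intro h
          exact hWm (h ▸ hi₀W)
        obtain ⟨j', hj'⟩ := hcov _ hne₀
        refine ⟨j', fun _ => ⟨hj', ?_⟩⟩
        intro hj'T
        apply hWm
        rw [hWdef]
        exact Finset.mem_insert_of_mem (Finset.mem_image.2 ⟨j', hj'T, hj'⟩)
      · push_neg at hm
        obtain ⟨b, hb⟩ := hm
        exact ⟨c b, fun h => absurd hb (h b)⟩
    set q : Fin J → Fin J := fun m => (hq' m).choose with hqdef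
    have hqspec : ∀ m, (∀ b, c b ≠ m) → ρ (q m) = i.succAbove m ∧ q m ∉ T :=
      fun m hm => (hq' m).choose_spec hm
    refine permanent_submatrix_le' M eT c heTinj hcinj q ?_ ?_
    · intro m m' hm hm' hqq
      have h1 := (hqspec m hm).1
      have h2 := (hqspec m' hm').1
      apply Fin.succAbove_right_injective (p := i)
      rw [← h1, ← h2, hqq]
    · intro m hm
      constructor
      · rw [hMdef, Matrix.of_apply, ← (hqspec m hm).1]
        exact Nat.one_le_iff_ne_zero.2 (fun h => hoff _ (hqspec m hm).2 (wt_eq_zero_iff'.1 h))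
      · intro a ha
        exact (hqspec m hm).2 (ha ▸ heTmem a)
  exact ⟨x, hxne, horth, hbound⟩


/-- minimum distance bound from the weight matrix. -/
theorem dmin_le_sum_permanent_wt {r J L : ℕ} (hr : 0 < r)
    (H : Matrix (Fin J) (Fin L) (Rr r))
    (A : Matrix (Fin J) (Fin L) ℕ) (hA : ∀ j i, A j i = wt (H j i))
    (S : Finset (Fin L)) (hS : S.card = J + 1)
    (hpos : 0 < ∑ i ∈ S.attach, (eraseSub A S hS i.1 i.2).permanent) :
    dmin H ≤ ∑ i ∈ S.attach, (eraseSub A S hS i.1 i.2).permanent := by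
  classical
  have heSmem : ∀ k, S.orderEmbOfFin hS k ∈ S := fun k => Finset.orderEmbOfFin_mem S hS k
  have hiso : ∀ k, ((S.orderIsoOfFin hS k : Fin L)) = S.orderEmbOfFin hS k :=
    fun k => Finset.coe_orderIsoOfFin_apply S hS k
  have henum : ∀ (i : Fin L) (pf : (S.erase i).card = J)
      (k : Fin (J+1)) (hik : i = S.orderEmbOfFin hS k) (m : Fin J),
      (S.erase i).orderEmbOfFin pf m = S.orderEmbOfFin hS (k.succAbove m) := by
    intro i pf k hik m
    subst hik
    exact congrFun (erase_orderEmbOfFin' S hS k pf) m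
  -- the sums agree
  have hBeq : (∑ i ∈ S.attach, (eraseSub A S hS i.1 i.2).permanent)
      = ∑ k : Fin (J+1), (Matrix.of fun j m =>
          wt (H j (S.orderEmbOfFin hS (k.succAbove m)))).permanent := by
    rw [← Finset.univ_eq_attach]
    rw [← Equiv.sum_comp (S.orderIsoOfFin hS).toEquiv
      (fun i : {y // y ∈ S} => (eraseSub A S hS i.1 i.2).permanent)]
    refine Finset.sum_congr rfl fun k _ => ?_
    refine congrArg Matrix.permanent ?_
    ext j m
    show A j (((S.erase ((S.orderIsoOfFin hS k : Fin L))).orderIsoOfFin _) m)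
        = wt (H j (S.orderEmbOfFin hS (k.succAbove m)))
    rw [Finset.coe_orderIsoOfFin_apply, henum _ _ k (hiso k), hA]
  -- extract an injective assignment with nonzero entries
  have hBpos : (0:ℕ) < ∑ k : Fin (J+1), (Matrix.of fun j m =>
      wt (H j (S.orderEmbOfFin hS (k.succAbove m)))).permanent := hBeq ▸ hpos
  obtain ⟨k₀, -, hk₀⟩ := Finset.exists_ne_zero_of_sum_ne_zero (Nat.pos_iff_ne_zero.mp hBpos)
  rw [Matrix.permanent] at hk₀
  obtain ⟨σ, -, hσ⟩ := Finset.exists_ne_zero_of_sum_ne_zero hk₀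
  have hall : ∀ m, wt (H (σ m) (S.orderEmbOfFin hS (k₀.succAbove m))) ≠ 0 := by
    intro m hm
    exact hσ (Finset.prod_eq_zero (Finset.mem_univ m) hm)
  have hρ₀inj : Function.Injective
      (fun j => k₀.succAbove (σ.symm j) : Fin J → Fin (J+1)) := fun a b h =>
    σ.symm.injective (Fin.succAbove_right_injective (p := k₀) h)
  have h0 : ∀ j, (Matrix.of fun j' k => H j' (S.orderEmbOfFin hS k) :
      Matrix (Fin J) (Fin (J+1)) (Rr r)) j (k₀.succAbove (σ.symm j)) ≠ 0 := by
    intro j hj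
    apply hall (σ.symm j)
    have : H (σ (σ.symm j)) (S.orderEmbOfFin hS (k₀.succAbove (σ.symm j))) = 0 := by
      rw [Equiv.apply_symm_apply]; exact hj
    rw [this, wt_zero']
  obtain ⟨x, hxne, horth, hb⟩ := core_lemma
    (Matrix.of fun j' k => H j' (S.orderEmbOfFin hS k)) _ hρ₀inj h0
  -- transfer the codeword to Fin L
  set c : Fin L → Rr r := fun l =>
    if h : l ∈ S then x ((S.orderIsoOfFin hS).symm ⟨l, h⟩) else 0 with hcdef
  have hceS : ∀ k, c (S.orderEmbOfFin hS k) = x k := by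
    intro k
    rw [hcdef]
    simp only
    rw [dif_pos (heSmem k)]
    have h1 : (⟨S.orderEmbOfFin hS k, heSmem k⟩ : {y // y ∈ S}) = S.orderIsoOfFin hS k :=
      Subtype.ext (hiso k).symm
    rw [h1, OrderIso.symm_apply_apply]
  have hcnS : ∀ l, l ∉ S → c l = 0 := by
    intro l hl; rw [hcdef]; simp only; rw [dif_neg hl]
  have hsumS : ∀ {M : Type} [inst : AddCommMonoid M] (f : Fin L → M),
      (∑ l ∈ S, f l) = ∑ k : Fin (J+1), f (S.orderEmbOfFin hS k) := by
    intro M inst f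
    calc (∑ l ∈ S, f l) = ∑ l ∈ Finset.image (S.orderEmbOfFin hS) Finset.univ, f l := by
          rw [image_orderEmbOfFin' S hS]
      _ = ∑ k : Fin (J+1), f (S.orderEmbOfFin hS k) :=
          Finset.sum_image (fun a _ b _ h => (S.orderEmbOfFin hS).injective h)
  have hcode : isCodeword H c := by
    intro j
    have h1 : (∑ l, H j l * c l) = ∑ l ∈ S, H j l * c l := by
      refine (Finset.sum_subset (Finset.subset_univ S) ?_).symm
      intro l _ hl
      rw [hcnS l hl, mul_zero]
    rw [h1, hsumS]
    have h2 : ∀ k, H j (S.orderEmbOfFin hS k) * c (S.orderEmbOfFin hS k)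
        = (Matrix.of fun j' k => H j' (S.orderEmbOfFin hS k)) j k * x k := by
      intro k; rw [hceS k]; rfl
    rw [Finset.sum_congr rfl fun k _ => h2 k]
    exact horth j
  have hcne : c ≠ 0 := by
    obtain ⟨k, hk⟩ := Function.ne_iff.1 hxne
    intro h
    apply hk
    have := congrFun h (S.orderEmbOfFin hS k)
    rw [hceS k] at this
    exact this
  have hwH : wH c = ∑ k, wt (x k) := by
    rw [wH]
    have h1 : (∑ l, wt (c l)) = ∑ l ∈ S, wt (c l) := by
      refine (Finset.sum_subset (Finset.subset_univ S) ?_).symm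
      intro l _ hl
      rw [hcnS l hl, wt_zero']
    rw [h1, hsumS]
    exact Finset.sum_congr rfl fun k _ => by rw [hceS k]
  refine le_trans (Nat.sInf_le ⟨c, hcode, hcne, rfl⟩) ?_
  rw [hwH, hBeq]
  exact hb
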